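/- arXiv:1412.7938 — 4 statements merged into one kernel-verified Lean document; each statement's English description precedes it below -/
import Mathlib

section
/- Let W = I + (√(1−γ) − 1) e_i e_iᵀ for γ ∈ (0,1). Then the i-th leverage score of WM equals (1−γ) μ_i(M) / (1 − γ μ_i(M)), which is at most μ_i(M). -/
open Matrix

lemma matrix_eq_of_mulVec {n m : ℕ} {A B : Matrix (Fin n) (Fin m) ℝ}
    (h : ∀ v, A *ᵥ v = B *ᵥ v) : A = B := by
  ext a b
  have := congrFun (h (Pi.single b 1)) a
  simpa [Matrix.mulVec_single_one] using this

lemma fix_of_mem_range {n : ℕ} {P : Matrix (Fin n) (Fin n) ℝ} (hPP : P * P = P)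
    {x : Fin n → ℝ} (hx : x ∈ LinearMap.range P.mulVecLin) : P *ᵥ x = x := by
  obtain ⟨y, rfl⟩ := hx
  simp only [Matrix.mulVecLin_apply, Matrix.mulVec_mulVec, hPP]

lemma proj_unique {n : ℕ} {P Q : Matrix (Fin n) (Fin n) ℝ}
    (hP : Pᵀ = P) (hPP : P * P = P) (hQ : Qᵀ = Q) (hQQ : Q * Q = Q)
    (hr : LinearMap.range P.mulVecLin = LinearMap.range Q.mulVecLin) : P = Q := by
  have hPQ : P * Q = Q := by
    apply matrix_eq_of_mulVec
    intro v
    rw [← Matrix.mulVec_mulVec]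
    exact fix_of_mem_range hPP (hr ▸ ⟨v, rfl⟩)
  have hQP : Q * P = P := by
    apply matrix_eq_of_mulVec
    intro v
    rw [← Matrix.mulVec_mulVec]
    exact fix_of_mem_range hQQ (hr ▸ ⟨v, rfl⟩)
  calc P = (Q * P)ᵀ := by rw [hQP, hP]
    _ = Pᵀ * Qᵀ := by rw [Matrix.transpose_mul]
    _ = P * Q := by rw [hP, hQ]
    _ = Q := hPQ

set_option maxHeartbeats 1000000 in
/-- Rank-one row weighting: scaling row `i` of `M` by `√(1-γ)` changes the `i`-th
leverage score to `(1-γ) μ_i / (1 - γ μ_i)`, which is at most `μ_i`. -/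
theorem leverage_after_row_weighting_self (n₁ n₂ k k' : ℕ)
    (M : Matrix (Fin n₁) (Fin n₂) ℝ) (γ : ℝ) (i : Fin n₁)
    (hγ0 : 0 < γ) (hγ1 : γ < 1)
    (U : Matrix (Fin n₁) (Fin k) ℝ) (U' : Matrix (Fin n₁) (Fin k') ℝ)
    (hU : Uᵀ * U = 1)
    (hspan : LinearMap.range U.mulVecLin = LinearMap.range M.mulVecLin)
    (hμ : (U * Uᵀ) i i < 1)
    (W : Matrix (Fin n₁) (Fin n₁) ℝ)
    (hW : W = 1 + (Real.sqrt (1 - γ) - 1) • single i i (1 : ℝ))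
    (hU' : U'ᵀ * U' = 1)
    (hspan' : LinearMap.range U'.mulVecLin = LinearMap.range (W * M).mulVecLin) :
    (U' * U'ᵀ) i i = (1 - γ) * (U * Uᵀ) i i / (1 - γ * (U * Uᵀ) i i) ∧
      (U' * U'ᵀ) i i ≤ (U * Uᵀ) i i := by
  -- notation
  set s : ℝ := Real.sqrt (1 - γ) with hs
  have hs2 : s ^ 2 = 1 - γ := Real.sq_sqrt (by linarith)
  set c : ℝ := s - 1 with hc
  set μ : ℝ := (U * Uᵀ) i i with hμdef
  set u : Fin k → ℝ := fun j => U i j with hu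
  have hμsum : μ = ∑ j, u j * u j := by
    simp [hμdef, Matrix.mul_apply, Matrix.transpose_apply, hu]
  have hμ0 : 0 ≤ μ := by
    rw [hμsum]; exact Finset.sum_nonneg fun j _ => mul_self_nonneg _
  have hden : 0 < 1 - γ * μ := by nlinarith
  set d : ℝ := γ / (1 - γ * μ) with hd
  have hd' : d * (1 - γ * μ) = γ := div_mul_cancel₀ _ (ne_of_gt hden)
  set E : Matrix (Fin n₁) (Fin n₁) ℝ := single i i (1 : ℝ) with hE
  set v : Matrix (Fin k) (Fin k) ℝ := vecMulVec u u with hv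
  set G : Matrix (Fin k) (Fin k) ℝ := 1 - γ • v with hG
  set H : Matrix (Fin k) (Fin k) ℝ := 1 + d • v with hH
  clear_value s c μ u d E v G H
  -- basic algebra facts
  have hEE : E * E = E := by rw [hE]; simp
  have hγc : γ = -(c + c + c * c) := by nlinarith [hs2]
  have hWW : W * W = 1 - γ • E := by
    rw [hW]
    simp only [mul_add, add_mul, mul_one, one_mul, Matrix.smul_mul, Matrix.mul_smul,
      smul_smul, hEE]
    match_scalars <;> nlinarith [hs2]
  have hUEU : Uᵀ * (E * U) = v := by
    ext a b
    simp [Matrix.mul_apply, hE, Matrix.single, hv, Matrix.vecMulVec_apply, hu,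
      ite_and, Finset.mul_sum, Finset.sum_ite_eq, Finset.sum_ite_eq']
  have hvv : v * v = μ • v := by
    ext a b
    simp only [Matrix.mul_apply, hv, Matrix.vecMulVec_apply, Matrix.smul_apply, smul_eq_mul,
      hμsum]
    rw [Finset.sum_mul]
    apply Finset.sum_congr rfl
    intro j _
    ring
  have hne : (1 - γ * μ) ≠ 0 := ne_of_gt hden
  have hγd : γ = d - d * (γ * μ) := by nlinarith [hd']
  have hHG : H * G = 1 := by
    rw [hH, hG]
    simp only [mul_sub, sub_mul, mul_add, add_mul, one_mul, mul_one, Matrix.smul_mul,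
      Matrix.mul_smul, smul_smul, hvv]
    match_scalars
    all_goals first
      | ring1
      | linear_combination (-1 : ℝ) * hγd
  have hGH : G * H = 1 := by
    rw [hH, hG]
    simp only [mul_sub, sub_mul, mul_add, add_mul, one_mul, mul_one, Matrix.smul_mul,
      Matrix.mul_smul, smul_smul, hvv]
    match_scalars
    all_goals first
      | ring1
      | linear_combination (-1 : ℝ) * hγd
  -- A = W*U, B = Uᵀ*W
  set A : Matrix (Fin n₁) (Fin k) ℝ := W * U with hA
  set B : Matrix (Fin k) (Fin n₁) ℝ := Uᵀ * W with hB
  clear_value A B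
  have hET : Eᵀ = E := by
    rw [hE]; ext a b
    simp [Matrix.transpose_apply, Matrix.single, and_comm]
  have hWT : Wᵀ = W := by
    rw [hW]
    simp [Matrix.transpose_add, Matrix.transpose_smul, hET]
  have hvT : vᵀ = v := by
    rw [hv]; ext a b; simp [Matrix.vecMulVec_apply, mul_comm]
  have hHT : Hᵀ = H := by
    rw [hH]
    simp [Matrix.transpose_add, Matrix.transpose_smul, hvT]
  have hAT : Aᵀ = B := by rw [hA, hB, Matrix.transpose_mul, hWT]
  have hBT : Bᵀ = A := by rw [← hAT, Matrix.transpose_transpose]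
  have hBA : B * A = G := by
    rw [hA, hB, Matrix.mul_assoc, ← Matrix.mul_assoc W W U, hWW, Matrix.sub_mul,
      Matrix.one_mul, Matrix.smul_mul, Matrix.mul_sub, Matrix.mul_smul, hUEU, hU, hG]
  -- P is the candidate projection
  set P : Matrix (Fin n₁) (Fin n₁) ℝ := A * H * B with hP
  clear_value P
  have hBP : B * P = B := by
    rw [hP]
    simp only [← Matrix.mul_assoc]
    rw [hBA, hGH, Matrix.one_mul]
  have hPA : P * A = A := by
    rw [hP]
    simp only [Matrix.mul_assoc]
    rw [hBA, hHG, Matrix.mul_one]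
  have hPP : P * P = P := by
    calc P * P = P * A * (H * B) := by
          nth_rewrite 2 [hP]
          simp only [Matrix.mul_assoc]
      _ = P := by rw [hPA, hP, Matrix.mul_assoc]
  have hPT : Pᵀ = P := by
    rw [hP, Matrix.transpose_mul, Matrix.transpose_mul, hBT, hHT, hAT]
    simp only [Matrix.mul_assoc]
  -- range facts
  have hrPA : LinearMap.range P.mulVecLin = LinearMap.range A.mulVecLin := by
    apply le_antisymm
    · rw [hP, Matrix.mul_assoc, Matrix.mulVecLin_mul]
      exact LinearMap.range_comp_le_range _ _
    · conv_lhs => rw [← hPA]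
      rw [Matrix.mulVecLin_mul]
      exact LinearMap.range_comp_le_range _ _
  have hrA : LinearMap.range A.mulVecLin = LinearMap.range U'.mulVecLin := by
    rw [hA, Matrix.mulVecLin_mul, LinearMap.range_comp, hspan, ← LinearMap.range_comp,
      ← Matrix.mulVecLin_mul, ← hspan']
  have hQ'U : U' * U'ᵀ * U' = U' := by rw [Matrix.mul_assoc, hU', Matrix.mul_one]
  have hQQ : (U' * U'ᵀ) * (U' * U'ᵀ) = U' * U'ᵀ := by rw [← Matrix.mul_assoc, hQ'U]
  have hQT : (U' * U'ᵀ)ᵀ = U' * U'ᵀ := by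
    rw [Matrix.transpose_mul, Matrix.transpose_transpose]
  have hrQ : LinearMap.range (U' * U'ᵀ).mulVecLin = LinearMap.range U'.mulVecLin := by
    apply le_antisymm
    · rw [Matrix.mulVecLin_mul]
      exact LinearMap.range_comp_le_range _ _
    · have h : LinearMap.range U'.mulVecLin
          = LinearMap.range ((U' * U'ᵀ * U').mulVecLin) := by rw [hQ'U]
      rw [h, Matrix.mulVecLin_mul]
      exact LinearMap.range_comp_le_range _ _
  have hPQ : P = U' * U'ᵀ :=
    proj_unique hPT hPP hQT hQQ (by rw [hrPA, hrA, hrQ])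
  -- entry computations
  have hEU : ∀ a, (E * U) i a = U i a := by
    intro a
    rw [hE, Matrix.mul_apply]
    simp [Matrix.single, ite_and, Finset.sum_ite_eq]
  have hUE : ∀ b, (Uᵀ * E) b i = U i b := by
    intro b
    rw [hE, Matrix.mul_apply]
    simp [Matrix.single, Matrix.transpose_apply, ite_and, Finset.sum_ite_eq']
  have hAia : ∀ a, A i a = s * u a := by
    intro a
    rw [hA, hW, Matrix.add_mul, Matrix.one_mul, Matrix.smul_mul, Matrix.add_apply,
      Matrix.smul_apply, hEU, hc]
    simp only [hu, smul_eq_mul]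
    ring
  have hBbi : ∀ b, B b i = s * u b := by
    intro b
    rw [hB, hW, Matrix.mul_add, Matrix.mul_one, Matrix.mul_smul, Matrix.add_apply,
      Matrix.smul_apply, hUE, hc, Matrix.transpose_apply]
    simp only [hu, smul_eq_mul]
    ring
  have hHab : ∀ a b, H a b = (if a = b then (1:ℝ) else 0) + d * (u a * u b) := by
    intro a b
    rw [hH]
    simp [Matrix.one_apply, hv, Matrix.vecMulVec_apply]
  have hAH : ∀ b, (A * H) i b = (s * (1 + d * μ)) * u b := by
    intro b
    rw [Matrix.mul_apply]
    calc ∑ a, A i a * H a b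
        = ∑ a, ((if a = b then s * u a else 0) + s * d * u b * (u a * u a)) := by
          apply Finset.sum_congr rfl
          intro a _
          rw [hAia a, hHab a b]
          split_ifs <;> ring
      _ = (∑ a, if a = b then s * u a else 0) + ∑ a, s * d * u b * (u a * u a) := by
          rw [Finset.sum_add_distrib]
      _ = s * u b + s * d * u b * μ := by
          rw [hμsum, ← Finset.mul_sum]
          simp
      _ = (s * (1 + d * μ)) * u b := by ring
  have hPii : P i i = s ^ 2 * (1 + d * μ) * μ := by
    rw [hP, Matrix.mul_apply]
    calc ∑ b, (A * H) i b * B b i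
        = ∑ b, (s ^ 2 * (1 + d * μ)) * (u b * u b) := by
          apply Finset.sum_congr rfl
          intro b _
          rw [hAH b, hBbi b]
          ring
      _ = s ^ 2 * (1 + d * μ) * μ := by rw [← Finset.mul_sum, hμsum]
  have h1 : (U' * U'ᵀ) i i = (1 - γ) * μ / (1 - γ * μ) := by
    rw [← hPQ, hPii, hs2, hd]
    field_simp
    try ring
  refine ⟨h1, ?_⟩
  rw [h1, div_le_iff₀ hden]
  nlinarith [mul_nonneg (mul_nonneg hγ0.le hμ0) (sub_nonneg.mpr hμ.le)]
end

section
/- Let ρ > 1, let μ̂ ∈ (1 − 1/ρ, 1), set μ = μ̂ − 1/(2ρ) and γ = (ρ − 1/(μ̂ − 1/(2ρ)))/(ρ − 1). If the true leverage score μ_true satisfies μ_true ≥ μ and μ_true < 1, then the post-weighting leverage score (1−γ)μ_true/(1 − γ μ_true) lies in [1/ρ, μ_true). -/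
/-- Safe small-step weighting rule: with `ρ > 1`, estimate `μ̂ ∈ (1-1/ρ, 1)`,
`μ = μ̂ - 1/(2ρ)` and `γ = (ρ - 1/μ)/(ρ-1) ∈ (0,1)`, any true leverage score
`μ_true ∈ [μ, 1)` is mapped by the weighting to a value in `[1/ρ, μ_true)`. -/
theorem safe_weighting_large_leverage (ρ μhat μtrue : ℝ) (hρ : 1 < ρ)
    (hμhat : μhat ∈ Set.Ioo (1 - 1 / ρ) 1)
    (μ : ℝ) (hμ : μ = μhat - 1 / (2 * ρ))
    (γ : ℝ) (hγ : γ = (ρ - 1 / μ) / (ρ - 1))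
    (hγ0 : 0 < γ) (hγ1 : γ < 1)
    (hlow : μ ≤ μtrue) (hhigh : μtrue < 1) :
    (1 - γ) * μtrue / (1 - γ * μtrue) ∈ Set.Ico (1 / ρ) μtrue := by
  have hρ0 : (0:ℝ) < ρ := by linarith
  have hρ1 : (0:ℝ) < ρ - 1 := by linarith
  have hu1 : 1 < 1 / μ := by
    rw [hγ, div_lt_one hρ1] at hγ1
    linarith
  have hu2 : 1 / μ < ρ := by
    rw [hγ, div_pos_iff] at hγ0
    rcases hγ0 with ⟨h, _⟩ | ⟨_, h⟩ <;> linarith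
  have hμpos : 0 < μ := by
    by_contra h
    push_neg at h
    have : 1 / μ ≤ 0 := one_div_nonpos.mpr h
    linarith
  have hu : μ * (1 / μ) = 1 := by field_simp
  have hμlt1 : μ < 1 := by nlinarith
  have hμtpos : 0 < μtrue := lt_of_lt_of_le hμpos hlow
  have hγμ : γ * μtrue < 1 := by nlinarith
  have hden : 0 < 1 - γ * μtrue := by linarith
  constructor
  · rw [div_le_div_iff₀ hρ0 hden]
    have hkey : 1 ≤ (1 / μ) * μtrue := by nlinarith
    rw [hγ]
    have h1 : (ρ - 1 / μ) / (ρ - 1) * (ρ - 1) = ρ - 1 / μ := by field_simp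
    nlinarith [mul_le_mul_of_nonneg_left hkey (le_of_lt hρ1)]
  · rw [div_lt_iff₀ hden]
    nlinarith [mul_pos (mul_pos hγ0 hμtpos) (sub_pos.mpr hhigh)]
end

section
/- Define the ℓ₁ hinge loss L(μ) = ∑_{l} max{μ_l − μ*_l, 0} on leverage-score vectors. Suppose a rank-one row weighting on index i decreases μ_i by δ₁ > 0 and increases each μ_j (j ≠ i) by Δμ_j ≥ 0 with ∑_{j≠i} Δμ_j = δ₁, and assume μ_i stays ≥ μ*_i after weighting. Then the decrement in the loss equals ∑_{j ∈ J} min{Δμ_j, μ*_j − μ_j}, where J = { j ≠ i : Δμ_j > 0 and μ_j < μ*_j }; in particular the loss does not increase. -/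
open Finset

lemma hinge_step (a d : ℝ) (hd : 0 ≤ d) :
    max a 0 - max (a + d) 0 = min d (max (-a) 0) - d := by
  simp only [max_def, min_def]
  split_ifs <;> linarith

/-- Decrement identity for the ℓ₁ hinge loss `L(ν) = ∑ₗ max{νₗ - μ*ₗ, 0}` under a
rank-one row weighting step: if `μᵢ` decreases by `δ > 0` (staying `≥ μ*ᵢ`) and each
`μⱼ` (`j ≠ i`) increases by `Δⱼ ≥ 0` with `∑_{j≠i} Δⱼ = δ`, then
`L(μ) - L(μ') = ∑_{j ∈ J} min{Δⱼ, μ*ⱼ - μⱼ} ≥ 0` where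
`J = {j ≠ i : Δⱼ > 0, μⱼ < μ*ⱼ}`. -/
theorem l1_hinge_loss_decrement (n : ℕ) (μ μ' μstar Δ : Fin n → ℝ) (i : Fin n)
    (δ : ℝ) (hδ : 0 < δ)
    (hi : μ' i = μ i - δ)
    (hstar : μstar i ≤ μ' i)
    (hj : ∀ j, j ≠ i → μ' j = μ j + Δ j)
    (hΔ : ∀ j, j ≠ i → 0 ≤ Δ j)
    (hsum : ∑ j ∈ univ.erase i, Δ j = δ) :
    (∑ l, max (μ l - μstar l) 0) - (∑ l, max (μ' l - μstar l) 0)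
        = ∑ j ∈ univ.filter (fun j => j ≠ i ∧ 0 < Δ j ∧ μ j < μstar j),
            min (Δ j) (μstar j - μ j) ∧
      0 ≤ ∑ j ∈ univ.filter (fun j => j ≠ i ∧ 0 < Δ j ∧ μ j < μstar j),
            min (Δ j) (μstar j - μ j) := by
  have hpos : 0 ≤ ∑ j ∈ univ.filter (fun j => j ≠ i ∧ 0 < Δ j ∧ μ j < μstar j),
      min (Δ j) (μstar j - μ j) := by
    apply Finset.sum_nonneg
    intro j hjf
    simp only [mem_filter] at hjf
    exact le_min hjf.2.2.1.le (by linarith [hjf.2.2.2])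
  refine ⟨?_, hpos⟩
  rw [← Finset.sum_sub_distrib]
  have hsplit : ∀ S : Finset (Fin n), i ∈ S →
      ∑ l ∈ S, (max (μ l - μstar l) 0 - max (μ' l - μstar l) 0)
      = (max (μ i - μstar i) 0 - max (μ' i - μstar i) 0)
        + ∑ l ∈ S.erase i, (max (μ l - μstar l) 0 - max (μ' l - μstar l) 0) := by
    intro S hS
    exact (Finset.add_sum_erase S _ hS).symm
  rw [hsplit univ (mem_univ i)]
  have hiterm : max (μ i - μstar i) 0 - max (μ' i - μstar i) 0 = δ := by
    have h1 : 0 ≤ μ' i - μstar i := by linarith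
    have h2 : 0 ≤ μ i - μstar i := by
      have := hi; linarith
    rw [max_eq_left h1, max_eq_left h2, hi]; ring
  rw [hiterm]
  have hterm : ∀ j ∈ univ.erase i,
      max (μ j - μstar j) 0 - max (μ' j - μstar j) 0
        = min (Δ j) (max (μstar j - μ j) 0) - Δ j := by
    intro j hjm
    have hji : j ≠ i := (mem_erase.mp hjm).1
    rw [hj j hji]
    have h2 := hinge_step (μ j - μstar j) (Δ j) (hΔ j hji)
    rw [show -(μ j - μstar j) = μstar j - μ j by ring] at h2
    rw [show μ j + Δ j - μstar j = μ j - μstar j + Δ j by ring, h2]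
  rw [Finset.sum_congr rfl hterm, Finset.sum_sub_distrib, hsum]
  have hkey : ∑ j ∈ univ.erase i, min (Δ j) (max (μstar j - μ j) 0)
      = ∑ j ∈ univ.filter (fun j => j ≠ i ∧ 0 < Δ j ∧ μ j < μstar j),
          min (Δ j) (μstar j - μ j) := by
    rw [show (univ.erase i : Finset (Fin n)) = univ.filter (fun j => j ≠ i) by
      ext j; simp [Finset.mem_erase]]
    rw [← Finset.sum_filter_ne_zero]
    apply Finset.sum_congr
    · ext j
      simp only [mem_filter, mem_univ, true_and, filter_filter]
      constructor
      · rintro ⟨hji, hne⟩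
        refine ⟨hji, ?_, ?_⟩
        · rcases lt_or_eq_of_le (hΔ j hji) with h | h
          · exact h
          · exfalso; apply hne; rw [← h]; simp
        · by_contra hle
          push_neg at hle
          apply hne
          rw [max_eq_right (by linarith), min_eq_right (hΔ j hji)]
      · rintro ⟨hji, hΔpos, hlt⟩
        refine ⟨hji, ?_⟩
        rw [max_eq_left (by linarith : (0:ℝ) ≤ μstar j - μ j)]
        have : 0 < min (Δ j) (μstar j - μ j) := lt_min hΔpos (by linarith)
        linarith
    · intro j hjf
      simp only [mem_filter, mem_univ, true_and] at hjf
      rw [max_eq_left (by linarith [hjf.2.2] : (0:ℝ) ≤ μstar j - μ j)]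
  rw [hkey]; ring
end

section
/- Under the setting of the ℓ₁ hinge loss decrement identity, if additionally there exists j ≠ i with μ_j < μ*_j and Δμ_j > 0, then the loss strictly decreases: L(μ') < L(μ). -/
open Finset

/-- Strict decrease of the ℓ₁ hinge loss: under the rank-one row weighting step, if
additionally some `j ≠ i` has `μⱼ < μ*ⱼ` and `Δⱼ > 0`, then `L(μ') < L(μ)`. -/
theorem l1_hinge_loss_strict_decrease (n : ℕ) (μ μ' μstar Δ : Fin n → ℝ) (i : Fin n)
    (δ : ℝ) (hδ : 0 < δ)
    (hi : μ' i = μ i - δ)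
    (hstar : μstar i ≤ μ' i)
    (hj : ∀ j, j ≠ i → μ' j = μ j + Δ j)
    (hΔ : ∀ j, j ≠ i → 0 ≤ Δ j)
    (hsum : ∑ j ∈ univ.erase i, Δ j = δ)
    (hex : ∃ j, j ≠ i ∧ μ j < μstar j ∧ 0 < Δ j) :
    (∑ l, max (μ' l - μstar l) 0) < ∑ l, max (μ l - μstar l) 0 := by
  obtain ⟨j₀, hj₀i, hj₀μ, hj₀Δ⟩ := hex
  rw [hi] at hstar
  have hi1 : max (μ' i - μstar i) 0 = μ i - δ - μstar i := by
    rw [hi]; exact max_eq_left (by linarith)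
  have hi2 : max (μ i - μstar i) 0 = μ i - μstar i :=
    max_eq_left (by linarith)
  have key : ∀ j ∈ univ.erase i,
      max (μ' j - μstar j) 0 ≤ max (μ j - μstar j) 0 + Δ j := by
    intro j hjmem
    have hne := Finset.ne_of_mem_erase hjmem
    rw [hj j hne]
    have h0 := hΔ j hne
    have h1 := le_max_left (μ j - μstar j) 0
    have h2 := le_max_right (μ j - μstar j) 0
    exact max_le (by linarith) (by linarith)
  have strict : max (μ' j₀ - μstar j₀) 0 < max (μ j₀ - μstar j₀) 0 + Δ j₀ := by
    rw [hj j₀ hj₀i, max_eq_right (by linarith : μ j₀ - μstar j₀ ≤ 0)]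
    have : max (μ j₀ + Δ j₀ - μstar j₀) 0 < Δ j₀ :=
      max_lt (by linarith) hj₀Δ
    linarith
  have hsplit : (∑ j ∈ univ.erase i, max (μ' j - μstar j) 0) <
      ∑ j ∈ univ.erase i, (max (μ j - μstar j) 0 + Δ j) :=
    Finset.sum_lt_sum key ⟨j₀, Finset.mem_erase.mpr ⟨hj₀i, Finset.mem_univ _⟩, strict⟩
  rw [Finset.sum_add_distrib, hsum] at hsplit
  rw [← Finset.add_sum_erase _ _ (Finset.mem_univ i),
    ← Finset.add_sum_erase _ (fun l => max (μ l - μstar l) 0) (Finset.mem_univ i),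
    hi1, hi2]
  linarith
end
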